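/- Let C ⊂ ℝ^n be a compact convex set, F a proper exposed face of C, and D ⊆ C a compact convex subset with D ∩ ∂C = F. Then there exists a compact convex set G with D ⊆ G ⊊ C, relint G ⊆ relint C, G ∩ ∂C = F, and such that G and C have the same set of supporting hyperplanes at every point x ∈ F. -/

import Mathlib

open Metric Set

section Helpers

variable {E : Type*} [NormedAddCommGroup E] [NormedSpace ℝ E]

set_option linter.unusedSectionVars false

lemma le_infDist' {s : Set E} (hs : s.Nonempty) {x : E} {b : ℝ}
    (h : ∀ y ∈ s, b ≤ dist x y) : b ≤ Metric.infDist x s := by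
  by_contra hb
  push_neg at hb
  obtain ⟨y, hy, hxy⟩ := (Metric.infDist_lt_iff hs).1 hb
  exact absurd (h y hy) (not_le.2 hxy)

lemma mem_relint_iff {s : Set E} {x : E} :
    x ∈ intrinsicInterior ℝ s ↔ x ∈ affineSpan ℝ s ∧
      ∃ ε > 0, ∀ w, w ∈ affineSpan ℝ s → dist w x < ε → w ∈ s := by
  constructor
  · rintro ⟨y, hy, rfl⟩
    obtain ⟨ε, hε, hball⟩ := Metric.mem_nhds_iff.1 (mem_interior_iff_mem_nhds.1 hy)
    refine ⟨y.2, ε, hε, fun w hw hdist => ?_⟩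
    have hmem : (⟨w, hw⟩ : affineSpan ℝ s) ∈ Metric.ball y ε := by
      rw [Metric.mem_ball, Subtype.dist_eq]; exact hdist
    exact hball hmem
  · rintro ⟨hx, ε, hε, h⟩
    refine ⟨⟨x, hx⟩, ?_, rfl⟩
    rw [mem_interior_iff_mem_nhds, Metric.mem_nhds_iff]
    refine ⟨ε, hε, fun z hz => ?_⟩
    have := Metric.mem_ball.1 hz
    rw [Subtype.dist_eq] at this
    exact h z z.2 this

lemma relint_extend {s : Set E} {x q : E} (hx : x ∈ intrinsicInterior ℝ s)
    (hq : q ∈ affineSpan ℝ s) : ∃ δ : ℝ, 0 < δ ∧ x + δ • (x - q) ∈ s := by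
  obtain ⟨hxs, ε, hε, h⟩ := mem_relint_iff.1 hx
  set δ := ε / (2 * (‖x - q‖ + 1)) with hδ
  have hnorm : (0:ℝ) ≤ ‖x - q‖ := norm_nonneg _
  have hδpos : 0 < δ := by positivity
  refine ⟨δ, hδpos, h _ ?_ ?_⟩
  · have h1 := (affineSpan ℝ s).smul_vsub_vadd_mem δ hxs hq hxs
    have h2 : δ • (x -ᵥ q) +ᵥ x = x + δ • (x - q) := by
      rw [vsub_eq_sub, vadd_eq_add]; abel
    rwa [h2] at h1
  · rw [dist_eq_norm]
    have h3 : x + δ • (x - q) - x = δ • (x - q) := by abel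
    rw [h3, norm_smul, Real.norm_eq_abs, abs_of_pos hδpos, hδ,
      div_mul_eq_mul_div, div_lt_iff₀ (by positivity)]
    nlinarith

lemma relint_combo {s : Set E} (hs : Convex ℝ s) {a b : E}
    (ha : a ∈ intrinsicInterior ℝ s) (hb : b ∈ s) {t : ℝ} (ht0 : 0 < t) (ht1 : t ≤ 1) :
    t • a + (1 - t) • b ∈ intrinsicInterior ℝ s := by
  obtain ⟨has, ε, hε, h⟩ := mem_relint_iff.1 ha
  have hbs : b ∈ affineSpan ℝ s := subset_affineSpan ℝ s hb
  set m := t • a + (1 - t) • b with hm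
  have hms : m ∈ affineSpan ℝ s := by
    have h1 := (affineSpan ℝ s).smul_vsub_vadd_mem t has hbs hbs
    have h2 : t • (a -ᵥ b) +ᵥ b = m := by
      rw [vsub_eq_sub, vadd_eq_add, hm]; module
    rwa [h2] at h1
  refine mem_relint_iff.2 ⟨hms, t * ε, by positivity, fun w hw hdist => ?_⟩
  set a' := a + t⁻¹ • (w - m) with ha'
  have ha's : a' ∈ affineSpan ℝ s := by
    have h1 := (affineSpan ℝ s).smul_vsub_vadd_mem t⁻¹ hw hms has
    have h2 : t⁻¹ • (w -ᵥ m) +ᵥ a = a' := by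
      rw [vsub_eq_sub, vadd_eq_add, ha']; abel
    rwa [h2] at h1
  have ha'mem : a' ∈ s := by
    apply h _ ha's
    rw [dist_eq_norm]
    have h3 : a' - a = t⁻¹ • (w - m) := by rw [ha']; abel
    rw [h3, norm_smul, Real.norm_eq_abs, abs_of_pos (by positivity)]
    have hdn : ‖w - m‖ < t * ε := by rw [← dist_eq_norm]; exact hdist
    calc t⁻¹ * ‖w - m‖ < t⁻¹ * (t * ε) := by
          exact mul_lt_mul_of_pos_left hdn (by positivity)
      _ = ε := by field_simp
  have hw_eq : w = t • a' + (1 - t) • b := by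
    have h1 : t • (t⁻¹ • (w - m)) = w - m := by
      rw [smul_smul, mul_inv_cancel₀ ht0.ne', one_smul]
    calc w = m + (w - m) := by abel
      _ = (t • a + (1 - t) • b) + t • (t⁻¹ • (w - m)) := by rw [h1]
      _ = t • a' + (1 - t) • b := by rw [ha', smul_add]; abel
  rw [hw_eq]
  exact hs ha'mem hb ht0.le (by linarith) (by ring)

lemma frontier_char {s : Set E} (hcl : IsClosed s) {x : E} (hx : x ∈ s) :
    (x ∈ intrinsicFrontier ℝ s ↔ x ∉ intrinsicInterior ℝ s) := by
  have hic : intrinsicClosure ℝ s = s :=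
    IsClosed.intrinsicClosure (hcl.preimage continuous_subtype_val)
  rw [← intrinsicClosure_diff_intrinsicInterior, hic]
  simp [hx]

end Helpers

set_option maxHeartbeats 1600000 in
/-- Proposition 3.3: if `C ⊂ ℝⁿ` is compact convex, `F` a proper (nonempty) exposed face
of `C`, and `D ⊆ C` compact convex with `D ∩ ∂C = F`, then there is a compact convex `G`
with `D ⊆ G ⊊ C`, `relint G ⊆ relint C`, `G ∩ ∂C = F`, and `G` and `C` have the same
supporting hyperplanes at every point of `F`. -/
theorem stmt9 (n : ℕ) (C F D : Set (EuclideanSpace ℝ (Fin n)))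
    (hC : IsCompact C) (hCconv : Convex ℝ C)
    (hF : IsExposed ℝ C F) (hFne : F.Nonempty) (hFproper : F ≠ C)
    (hD : IsCompact D) (hDconv : Convex ℝ D) (hDC : D ⊆ C)
    (hDbd : D ∩ intrinsicFrontier ℝ C = F) :
    ∃ G : Set (EuclideanSpace ℝ (Fin n)), IsCompact G ∧ Convex ℝ G ∧
      D ⊆ G ∧ G ⊆ C ∧ G ≠ C ∧
      intrinsicInterior ℝ G ⊆ intrinsicInterior ℝ C ∧
      G ∩ intrinsicFrontier ℝ C = F ∧
      (∀ x ∈ F, ∀ p : EuclideanSpace ℝ (Fin n), p ≠ 0 →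
        ((∀ y ∈ G, (inner ℝ (y - x) p : ℝ) ≤ 0) ↔
          (∀ y ∈ C, (inner ℝ (y - x) p : ℝ) ≤ 0))) := by
  classical
  obtain ⟨l, hFeq⟩ := hF hFne
  obtain ⟨x₀, hx₀F⟩ := hFne
  set c : ℝ := l x₀ with hc
  have hx₀' := hFeq ▸ hx₀F
  have hx₀C : x₀ ∈ C := hx₀'.1
  have hlmax : ∀ y ∈ C, l y ≤ c := hx₀'.2
  have hmemF : ∀ {y}, y ∈ F ↔ (y ∈ C ∧ l y = c) := by
    intro y
    rw [hFeq]
    constructor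
    · rintro ⟨h1, h2⟩; exact ⟨h1, le_antisymm (hlmax y h1) (h2 x₀ hx₀C)⟩
    · rintro ⟨h1, h2⟩; exact ⟨h1, fun z hz => (hlmax z hz).trans h2.ge⟩
  have hFC : F ⊆ C := fun z hz => (hmemF.1 hz).1
  obtain ⟨y₀, hy₀C, hy₀F⟩ : ∃ y, y ∈ C ∧ y ∉ F := by
    by_contra h
    push_neg at h
    exact hFproper (Subset.antisymm hFC h)
  have hy₀lt : l y₀ < c :=
    lt_of_le_of_ne (hlmax y₀ hy₀C) (fun h => hy₀F (hmemF.2 ⟨hy₀C, h⟩))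
  obtain ⟨z₀, hz₀⟩ := Set.Nonempty.intrinsicInterior hCconv ⟨x₀, hx₀C⟩
  have hz₀C : z₀ ∈ C := intrinsicInterior_subset hz₀
  have hCcl : IsClosed C := hC.isClosed
  -- the complement of C in its affine span
  set S : Set (EuclideanSpace ℝ (Fin n)) := (affineSpan ℝ C : Set _) \ C with hS
  have hSne : S.Nonempty := by
    obtain ⟨R, hR⟩ := hC.isBounded.subset_closedBall 0
    have hxy : y₀ ≠ x₀ := fun h => hy₀F (h ▸ hx₀F)
    have hnpos : 0 < ‖y₀ - x₀‖ := by
      rw [norm_pos_iff, sub_ne_zero]; exact hxy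
    set k : ℝ := (R + ‖x₀‖ + 1) / ‖y₀ - x₀‖ with hk
    set w : EuclideanSpace ℝ (Fin n) := x₀ + k • (y₀ - x₀) with hw
    have hwspan : w ∈ affineSpan ℝ C := by
      have h1 := (affineSpan ℝ C).smul_vsub_vadd_mem k (subset_affineSpan ℝ C hy₀C)
        (subset_affineSpan ℝ C hx₀C) (subset_affineSpan ℝ C hx₀C)
      have h2 : k • (y₀ -ᵥ x₀) +ᵥ x₀ = w := by
        rw [vsub_eq_sub, vadd_eq_add, hw]; abel
      rwa [h2] at h1
    refine ⟨w, hwspan, fun hwC => ?_⟩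
    have hwR : ‖w‖ ≤ R := by
      have := hR hwC
      rwa [Metric.mem_closedBall, dist_zero_right] at this
    have hR0 : (0:ℝ) ≤ R := le_trans dist_nonneg (Metric.mem_closedBall.1 (hR hx₀C))
    have hkpos : 0 < k := div_pos (by linarith [norm_nonneg x₀]) hnpos
    have hknorm : ‖k • (y₀ - x₀)‖ = R + ‖x₀‖ + 1 := by
      rw [norm_smul, Real.norm_eq_abs, abs_of_pos hkpos, hk,
        div_mul_cancel₀ _ hnpos.ne']
    have h4 : ‖k • (y₀ - x₀)‖ ≤ ‖w‖ + ‖x₀‖ := by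
      calc ‖k • (y₀ - x₀)‖ = ‖w - x₀‖ := by rw [hw]; congr 1; abel
        _ ≤ ‖w‖ + ‖x₀‖ := norm_sub_le _ _
    rw [hknorm] at h4
    linarith
  set d : EuclideanSpace ℝ (Fin n) → ℝ := fun y => Metric.infDist y S with hd
  have hd0 : ∀ y, 0 ≤ d y := fun y => Metric.infDist_nonneg
  have hdpos : ∀ y ∈ intrinsicInterior ℝ C, 0 < d y := by
    intro y hy
    obtain ⟨hyspan, ε, hε, h⟩ := mem_relint_iff.1 hy
    have : ε ≤ d y := by
      apply le_infDist' hSne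
      intro w hwS
      by_contra hcon
      push_neg at hcon
      exact hwS.2 (h w hwS.1 (by rwa [dist_comm] at hcon))
    linarith
  have hdzero : ∀ y ∈ C, y ∉ intrinsicInterior ℝ C → d y = 0 := by
    intro y hy hyni
    by_contra hne
    have hpos : 0 < d y := lt_of_le_of_ne (hd0 y) (Ne.symm hne)
    apply hyni
    refine mem_relint_iff.2 ⟨subset_affineSpan ℝ C hy, d y, hpos, fun w hw hdist => ?_⟩
    by_contra hwC
    have : d y ≤ dist y w := Metric.infDist_le_dist_of_mem ⟨hw, hwC⟩
    rw [dist_comm] at hdist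
    linarith
  -- concavity of d along segments in C
  have hconc : ∀ x ∈ C, ∀ y ∈ C, ∀ t : ℝ, 0 ≤ t → t ≤ 1 →
      (1 - t) * d x + t * d y ≤ d ((1 - t) • x + t • y) := by
    intro x hx y hy t ht0 ht1
    set m := (1 - t) • x + t • y with hm
    have hmC : m ∈ C := hCconv hx hy (by linarith) ht0 (by ring)
    have hmspan : m ∈ affineSpan ℝ C := subset_affineSpan ℝ C hmC
    set r := (1 - t) * d x + t * d y with hr
    rcases le_or_gt r 0 with hle | hrpos
    · exact hle.trans (hd0 m)
    apply le_infDist' hSne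
    intro w hwS
    by_contra hcon
    push_neg at hcon
    set v := w - m with hv
    have hvr : ‖v‖ < r := by
      rw [hv, ← dist_eq_norm, dist_comm]; exact hcon
    have hspan : ∀ z, z ∈ C → ∀ s : ℝ, z + s • v ∈ affineSpan ℝ C := by
      intro z hz s
      have h1 := (affineSpan ℝ C).smul_vsub_vadd_mem s hwS.1 hmspan
        (subset_affineSpan ℝ C hz)
      have h2 : s • (w -ᵥ m) +ᵥ z = z + s • v := by
        rw [vsub_eq_sub, vadd_eq_add, hv]; abel
      rwa [h2] at h1
    have key : ∀ z, z ∈ C → z + (d z / r) • v ∈ C := by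
      intro z hz
      rcases eq_or_lt_of_le (hd0 z) with h0 | h0
      · rw [← h0]
        simpa using hz
      · by_contra hneg
        have hmem : z + (d z / r) • v ∈ S := ⟨hspan z hz _, hneg⟩
        have h5 : d z ≤ dist z (z + (d z / r) • v) := Metric.infDist_le_dist_of_mem hmem
        rw [dist_eq_norm] at h5
        have h6 : z - (z + (d z / r) • v) = -((d z / r) • v) := by abel
        rw [h6, norm_neg, norm_smul, Real.norm_eq_abs, abs_of_pos (by positivity)] at h5
        have h7 : d z / r * ‖v‖ < d z / r * r := by
          exact mul_lt_mul_of_pos_left hvr (by positivity)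
        rw [div_mul_cancel₀ _ hrpos.ne'] at h7
        linarith
    have hw1 := key x hx
    have hw2 := key y hy
    have hwC : w ∈ C := by
      have heq : w = (1 - t) • (x + (d x / r) • v) + t • (y + (d y / r) • v) := by
        have hsum : (1 - t) * (d x / r) + t * (d y / r) = 1 := by
          field_simp
          rw [hr]
        rw [smul_add, smul_add, smul_smul, smul_smul, add_add_add_comm, ← add_smul, hsum,
          one_smul, ← hm, hv]
        abel
      rw [heq]
      exact hCconv hw1 hw2 (by linarith) ht0 (by ring)
    exact hwS.2 hwC
  -- the second-order contact body G₀
  set G₀ : Set (EuclideanSpace ℝ (Fin n)) := {y | y ∈ C ∧ (c - l y)^2 ≤ d y} with hG₀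
  have hG₀C : G₀ ⊆ C := fun y hy => hy.1
  have hFG₀ : F ⊆ G₀ := by
    intro x hx
    obtain ⟨hxC, hxl⟩ := hmemF.1 hx
    exact ⟨hxC, by rw [hxl]; simpa using hd0 x⟩
  have hG₀ne : G₀.Nonempty := ⟨x₀, hFG₀ hx₀F⟩
  have hFD : F ⊆ D := by
    intro z hz
    rw [← hDbd] at hz
    exact hz.1
  have hDne : D.Nonempty := ⟨x₀, hFD hx₀F⟩
  have hdcont : Continuous d := Metric.continuous_infDist_pt S
  have hG₀closed : IsClosed G₀ := by
    have heq : G₀ = C ∩ {y | (c - l y)^2 - d y ≤ 0} := by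
      ext y
      simp [hG₀, sub_nonpos]
    rw [heq]
    exact hCcl.inter (isClosed_le (((continuous_const.sub l.continuous).pow 2).sub hdcont)
      continuous_const)
  have hG₀cpt : IsCompact G₀ := hC.of_isClosed_subset hG₀closed hG₀C
  have hG₀conv : Convex ℝ G₀ := by
    intro u hu v hv a b ha hb hab
    refine ⟨hCconv hu.1 hv.1 ha hb hab, ?_⟩
    have hlm : l (a • u + b • v) = a * l u + b * l v := by
      simp only [map_add, map_smul, smul_eq_mul]
    have hdm : a * d u + b * d v ≤ d (a • u + b • v) := by
      have h1 := hconc u hu.1 v hv.1 b hb (by linarith)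
      have ha' : (1:ℝ) - b = a := by linarith
      rw [ha'] at h1
      exact h1
    have h2 := hu.2
    have h3 := hv.2
    have hexp : c - l (a • u + b • v) = a * (c - l u) + b * (c - l v) := by
      rw [hlm]; linear_combination (-c) * hab
    have hid : a * (c - l u)^2 + b * (c - l v)^2 - (a * (c - l u) + b * (c - l v))^2
        = a * b * ((c - l u) - (c - l v))^2 := by
      linear_combination (-(a * (c - l u)^2 + b * (c - l v)^2)) * hab
    have h2' := mul_le_mul_of_nonneg_left h2 ha
    have h3' := mul_le_mul_of_nonneg_left h3 hb
    rw [hexp]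
    linarith [hid, h2', h3', hdm,
      mul_nonneg (mul_nonneg ha hb) (sq_nonneg ((c - l u) - (c - l v)))]
  -- G is the join of D and G₀
  set G : Set (EuclideanSpace ℝ (Fin n)) := convexJoin ℝ D G₀ with hG
  have hDG : D ⊆ G := subset_convexJoin_left hG₀ne
  have hG₀G : G₀ ⊆ G := subset_convexJoin_right hDne
  have hGC : G ⊆ C := convexJoin_subset hDC hG₀C hCconv
  have hGconv : Convex ℝ G := hDconv.convexJoin hG₀conv
  have hGcpt : IsCompact G := by
    have himg : G = (fun p : ℝ × (EuclideanSpace ℝ (Fin n)) × (EuclideanSpace ℝ (Fin n)) =>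
        p.1 • p.2.1 + (1 - p.1) • p.2.2) '' (Icc (0:ℝ) 1 ×ˢ D ×ˢ G₀) := by
      ext z
      constructor
      · intro hz
        rw [hG, mem_convexJoin] at hz
        obtain ⟨a, haD, b, hbG, hseg⟩ := hz
        obtain ⟨u, v, hu, hv, huv, heq⟩ := hseg
        refine ⟨(u, a, b), ⟨⟨hu, by linarith⟩, haD, hbG⟩, ?_⟩
        simp only
        rw [show (1:ℝ) - u = v from by linarith, heq]
      · rintro ⟨⟨u, a, b⟩, ⟨⟨h0, h1⟩, haD, hbG⟩, rfl⟩
        rw [hG, mem_convexJoin]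
        exact ⟨a, haD, b, hbG, u, 1 - u, h0, by linarith, by ring, rfl⟩
    rw [himg]
    exact (isCompact_Icc.prod (hD.prod hG₀cpt)).image (by fun_prop)
  -- initial segments from F towards relative interior points lie in G₀
  have hsegG₀ : ∀ x ∈ F, ∀ y ∈ intrinsicInterior ℝ C,
      ∃ t : ℝ, 0 < t ∧ t ≤ 1 ∧ (1 - t) • x + t • y ∈ G₀ := by
    intro x hxF y hy
    have hyC : y ∈ C := intrinsicInterior_subset hy
    have hdy : 0 < d y := hdpos y hy
    obtain ⟨hxC, hxl⟩ := hmemF.1 hxF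
    set qq : ℝ := (c - l y)^2 with hqq
    have hqq0 : 0 ≤ qq := sq_nonneg _
    set t : ℝ := min 1 (d y / (qq + 1)) with ht
    have ht0 : 0 < t := lt_min one_pos (by positivity)
    have ht1 : t ≤ 1 := min_le_left _ _
    refine ⟨t, ht0, ht1, ⟨hCconv hxC hyC (by linarith) ht0.le (by ring), ?_⟩⟩
    have hlm : l ((1-t) • x + t • y) = (1-t) * l x + t * l y := by
      simp only [map_add, map_smul, smul_eq_mul]
    have hl : c - l ((1-t) • x + t • y) = t * (c - l y) := by
      rw [hlm, hxl]; ring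
    have hdm : t * d y ≤ d ((1-t) • x + t • y) := by
      have h1 := hconc x hxC y hyC t ht0.le ht1
      nlinarith [hd0 x]
    have htq : t * qq ≤ d y := by
      have h2 : t ≤ d y / (qq + 1) := min_le_right _ _
      calc t * qq ≤ (d y / (qq+1)) * qq := by nlinarith
        _ ≤ d y := by
            rw [div_mul_eq_mul_div, div_le_iff₀ (by positivity)]
            nlinarith
    rw [hl]
    calc (t * (c - l y))^2 = t * (t * qq) := by rw [hqq]; ring
      _ ≤ t * d y := by nlinarith
      _ ≤ _ := hdm
  have hfr : ∀ {y}, y ∈ C → (y ∈ intrinsicFrontier ℝ C ↔ y ∉ intrinsicInterior ℝ C) :=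
    fun {y} hy => frontier_char hCcl hy
  have hFfr : F ⊆ intrinsicFrontier ℝ C := by
    intro x hxF
    obtain ⟨hxC, hxl⟩ := hmemF.1 hxF
    rw [hfr hxC]
    intro hxint
    obtain ⟨δ, hδ, hmem⟩ := relint_extend hxint (subset_affineSpan ℝ C hy₀C)
    have h1 := hlmax _ hmem
    have hlval : l (x + δ • (x - y₀)) = l x + δ * (l x - l y₀) := by
      simp only [map_add, map_smul, map_sub, smul_eq_mul]
    rw [hlval, hxl] at h1
    nlinarith
  obtain ⟨t₀, ht₀0, ht₀1, hqG₀⟩ := hsegG₀ x₀ hx₀F z₀ hz₀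
  set q : EuclideanSpace ℝ (Fin n) := (1 - t₀) • x₀ + t₀ • z₀ with hqdef
  have hqrel : q ∈ intrinsicInterior ℝ C := by
    have h1 := relint_combo hCconv hz₀ hx₀C ht₀0 ht₀1
    rwa [show t₀ • z₀ + (1 - t₀) • x₀ = q from by rw [hqdef]; abel] at h1
  have hqG : q ∈ G := hG₀G hqG₀
  -- the boundary intersection property
  have hGF : G ∩ intrinsicFrontier ℝ C = F := by
    apply Subset.antisymm
    · intro m hm
      obtain ⟨hmG, hmfr⟩ := hm
      have hmC : m ∈ C := hGC hmG
      have hmni : m ∉ intrinsicInterior ℝ C := (hfr hmC).1 hmfr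
      rw [hG, mem_convexJoin] at hmG
      obtain ⟨a, haD, b, hbG₀, hseg⟩ := hmG
      obtain ⟨u, v, hu, hv, huv, heq⟩ := hseg
      have haC : a ∈ C := hDC haD
      have hbC : b ∈ C := hbG₀.1
      have hbF : b ∉ intrinsicInterior ℝ C → b ∈ F := by
        intro hbni
        have hdb : d b = 0 := hdzero b hbC hbni
        have h2 := hbG₀.2
        rw [hdb] at h2
        have hlb : l b = c := by nlinarith [sq_nonneg (c - l b)]
        exact hmemF.2 ⟨hbC, hlb⟩
      rcases eq_or_lt_of_le hu with hu0 | hu0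
      · have hmb : m = b := by
          rw [← heq, ← hu0, show v = 1 from by linarith]
          simp only [zero_smul, one_smul, zero_add]
        rw [hmb]
        exact hbF (hmb ▸ hmni)
      rcases eq_or_lt_of_le hv with hv0 | hv0
      · have hma : m = a := by
          rw [← heq, ← hv0, show u = 1 from by linarith]
          simp only [zero_smul, one_smul, add_zero]
        rw [← hDbd]
        exact ⟨hma ▸ haD, hmfr⟩
      · have hani : a ∉ intrinsicInterior ℝ C := by
          intro ha'
          apply hmni
          have h3 := relint_combo hCconv ha' hbC hu0 (by linarith)
          rwa [show (1:ℝ) - u = v from by linarith, heq] at h3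
        have hbni : b ∉ intrinsicInterior ℝ C := by
          intro hb'
          apply hmni
          have h3 := relint_combo hCconv hb' haC hv0 (by linarith)
          rw [show (1:ℝ) - v = u from by linarith, add_comm] at h3
          rwa [heq] at h3
        have haF : a ∈ F := by
          rw [← hDbd]
          exact ⟨haD, (hfr haC).2 hani⟩
        have hbF' : b ∈ F := hbF hbni
        have hla := (hmemF.1 haF).2
        have hlb := (hmemF.1 hbF').2
        have hlm : l m = c := by
          have h4 : l (u • a + v • b) = u * l a + v * l b := by
            simp only [map_add, map_smul, smul_eq_mul]
          rw [← heq, h4, hla, hlb]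
          linear_combination c * huv
        exact hmemF.2 ⟨hmC, hlm⟩
    · intro x hx
      exact ⟨hG₀G (hFG₀ hx), hFfr hx⟩
  -- G ≠ C
  have hGne : G ≠ C := by
    intro hGeq
    obtain ⟨w, hwC, hwmin⟩ := hC.exists_isMinOn ⟨x₀, hx₀C⟩ l.continuous.continuousOn
    have hwl : l w ≤ l y₀ := hwmin hy₀C
    have hwlt : l w < c := lt_of_le_of_lt hwl hy₀lt
    have hwni : w ∉ intrinsicInterior ℝ C := by
      intro hwint
      obtain ⟨δ, hδ, hmem⟩ := relint_extend hwint (subset_affineSpan ℝ C hx₀C)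
      have h1 : l w ≤ l (w + δ • (w - x₀)) := hwmin hmem
      have h2 : l (w + δ • (w - x₀)) = l w + δ * (l w - l x₀) := by
        simp only [map_add, map_smul, map_sub, smul_eq_mul]
      rw [h2, ← hc] at h1
      nlinarith
    have hwF : w ∈ F := by
      have hwfr : w ∈ intrinsicFrontier ℝ C := (hfr hwC).2 hwni
      rw [← hGF, hGeq]
      exact ⟨hwC, hwfr⟩
    have h5 : l w = c := (hmemF.1 hwF).2
    linarith
  -- relative interior inclusion
  have hrelint : intrinsicInterior ℝ G ⊆ intrinsicInterior ℝ C := by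
    intro g hg
    have hgG : g ∈ G := intrinsicInterior_subset hg
    have hgC : g ∈ C := hGC hgG
    by_contra hgni
    obtain ⟨δ, hδ, hmem⟩ := relint_extend hg (subset_affineSpan ℝ G hqG)
    have hg'C : g + δ • (g - q) ∈ C := hGC hmem
    have h1δ : (0:ℝ) < 1 + δ := by linarith
    have hcombo := relint_combo hCconv hqrel hg'C
      (t := δ / (1 + δ)) (by positivity) (by rw [div_le_one h1δ]; linarith)
    apply hgni
    have hgeq : (δ/(1+δ)) • q + (1 - δ/(1+δ)) • (g + δ • (g - q)) = g := by
      match_scalars <;> field_simp <;> ring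
    rwa [hgeq] at hcombo
  -- the supporting-hyperplane property
  have hsupp : ∀ x ∈ F, ∀ p : EuclideanSpace ℝ (Fin n), p ≠ 0 →
      ((∀ y ∈ G, (inner ℝ (y - x) p : ℝ) ≤ 0) ↔ (∀ y ∈ C, (inner ℝ (y - x) p : ℝ) ≤ 0)) := by
    intro x hxF p hp
    constructor
    · intro H y hyC
      have hrel : ∀ y', y' ∈ intrinsicInterior ℝ C → (inner ℝ (y' - x) p : ℝ) ≤ 0 := by
        intro y' hy'
        obtain ⟨t, ht0, ht1, hmem⟩ := hsegG₀ x hxF y' hy'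
        have h1 := H _ (hG₀G hmem)
        have hexp : (1 - t) • x + t • y' - x = t • (y' - x) := by module
        rw [hexp, real_inner_smul_left] at h1
        by_contra hpos
        push_neg at hpos
        nlinarith [mul_pos ht0 hpos]
      set A : ℝ := inner ℝ (y - x) p with hA
      set B : ℝ := inner ℝ (z₀ - x) p with hB
      have hAB : ∀ s : ℝ, 0 < s → s ≤ 1 → (1 - s) * A + s * B ≤ 0 := by
        intro s hs0 hs1
        have hys := relint_combo hCconv hz₀ hyC hs0 hs1
        have h1 := hrel _ hys
        have hexp : s • z₀ + (1 - s) • y - x = s • (z₀ - x) + (1 - s) • (y - x) := by module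
        rw [hexp, inner_add_left, real_inner_smul_left, real_inner_smul_left] at h1
        linarith
      by_contra hcon
      push_neg at hcon
      rcases le_or_gt (A - B) 0 with hab | hab
      · have h1 := hAB 1 one_pos le_rfl
        norm_num at h1
        linarith
      · set s : ℝ := min 1 (A / (2 * (A - B))) with hs
        have hs0 : 0 < s := lt_min one_pos (by positivity)
        have hs1 : s ≤ 1 := min_le_left _ _
        have h1 := hAB s hs0 hs1
        have h2 : s * (A - B) ≤ A / 2 := by
          have h3 : s ≤ A / (2 * (A - B)) := min_le_right _ _
          calc s * (A - B) ≤ (A / (2 * (A - B))) * (A - B) := by nlinarith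
            _ = A / 2 := by field_simp
        nlinarith
    · intro H y hyG
      exact H y (hGC hyG)
  exact ⟨G, hGcpt, hGconv, hDG, hGC, hGne, hrelint, hGF, hsupp⟩
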